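/- Let K > 1, L > 0, 0 < z and 0 ≤ δ ≤ z. Define CR(α) = (L + (K−1)(L − α(1 − δ/z))) / (L + (K−1)δ(1 − α/z)). Then for every α ∈ [0, z], CR(α) ≤ max{ K·L / (L + (K−1)δ), 1 + (K−1)(1 + δ/L − z/L) }; that is, the supremum of CR over [0, z] is attained at an endpoint and equals max{CR(0), CR(z)}. -/
import Mathlib


/-- The cost-ratio function is maximized at an endpoint of `[0, z]`:
for every `α ∈ [0, z]`,
`CR(α) ≤ max{ K·L/(L + (K−1)δ), 1 + (K−1)(1 + δ/L − z/L) } = max{CR(0), CR(z)}`. -/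
theorem stmt_2 (K L z δ : ℝ) (hK : 1 < K) (hL : 0 < L) (hz : 0 < z)
    (hδ0 : 0 ≤ δ) (hδz : δ ≤ z) :
    ∀ α ∈ Set.Icc (0 : ℝ) z,
      (L + (K - 1) * (L - α * (1 - δ / z))) / (L + (K - 1) * δ * (1 - α / z)) ≤
        max (K * L / (L + (K - 1) * δ)) (1 + (K - 1) * (1 + δ / L - z / L)) := by
  rintro α ⟨hα0, hαz⟩
  set M := max (K * L / (L + (K - 1) * δ)) (1 + (K - 1) * (1 + δ / L - z / L)) with hM
  have hz' : z ≠ 0 := hz.ne'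
  have hL' : L ≠ 0 := hL.ne'
  have hK0 : 0 ≤ K - 1 := by linarith
  have ht0 : 0 ≤ 1 - α / z := by
    have : α / z ≤ 1 := (div_le_one hz).mpr hαz
    linarith
  have ht1 : 0 ≤ α / z := div_nonneg hα0 hz.le
  have hD0 : 0 < L + (K - 1) * δ := by nlinarith
  have hM0 : K * L ≤ M * (L + (K - 1) * δ) := by
    have h := le_max_left (K * L / (L + (K - 1) * δ)) (1 + (K - 1) * (1 + δ / L - z / L))
    rw [div_le_iff₀ hD0] at h
    exact h
  have hMz : L + (K - 1) * (L - z + δ) ≤ M * L := by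
    have h := le_max_right (K * L / (L + (K - 1) * δ)) (1 + (K - 1) * (1 + δ / L - z / L))
    have h2 := mul_le_mul_of_nonneg_right h hL.le
    have hδL : δ / L * L = δ := div_mul_cancel₀ δ hL'
    have hzL : z / L * L = z := div_mul_cancel₀ z hL'
    nlinarith
  have hDα : 0 < L + (K - 1) * δ * (1 - α / z) := by
    have : 0 ≤ (K - 1) * δ * (1 - α / z) := mul_nonneg (mul_nonneg hK0 hδ0) ht0
    linarith
  rw [div_le_iff₀ hDα]
  have key : L + (K - 1) * (L - α * (1 - δ / z)) =
      (1 - α / z) * (K * L) + (α / z) * (L + (K - 1) * (L - z + δ)) := by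
    field_simp
    ring
  have key2 : M * (L + (K - 1) * δ * (1 - α / z)) =
      (1 - α / z) * (M * (L + (K - 1) * δ)) + (α / z) * (M * L) := by
    ring
  rw [key, key2]
  exact add_le_add (mul_le_mul_of_nonneg_left hM0 ht0) (mul_le_mul_of_nonneg_left hMz ht1)
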